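/- For n ≥ 1, the number of Fishburn permutations of length n avoiding both classical patterns 321 and 312 equals the n-th Fibonacci number F_n, where F_0 = F_1 = 1 and F_n = F_{n-1} + F_{n-2}. -/

import Mathlib

set_option maxRecDepth 10000

open Equiv Equiv.Perm


/-- A permutation `π` of `Fin n` contains the classical pattern `p` (given as a
function `Fin k → ℕ` listing the pattern's entries). -/
def Contains {n k : ℕ} (π : Equiv.Perm (Fin n)) (p : Fin k → ℕ) : Prop :=
  ∃ f : Fin k → Fin n, StrictMono f ∧ ∀ i j, p i < p j ↔ π (f i) < π (f j)

/-- Classical pattern avoidance. -/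
def Avoids {n k : ℕ} (π : Equiv.Perm (Fin n)) (p : Fin k → ℕ) : Prop :=
  ¬ Contains π p

/-- A permutation is Fishburn if there are no indices `i < j` with
`π i, π (i+1), π j` forming a 231 pattern and `π i = π j + 1`. -/
def IsFishburn {n : ℕ} (π : Equiv.Perm (Fin n)) : Prop :=
  ¬ ∃ (i j : ℕ) (hij : i + 1 < j) (hj : j < n),
      π ⟨i, by omega⟩ < π ⟨i + 1, by omega⟩ ∧
      π ⟨j, hj⟩ < π ⟨i, by omega⟩ ∧
      (π ⟨i, by omega⟩ : ℕ) = (π ⟨j, hj⟩ : ℕ) + 1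

def Nearby {n : ℕ} (π : Equiv.Perm (Fin n)) : Prop :=
  ∀ i, (π i : ℕ) ≤ (i : ℕ) + 1 ∧ (i : ℕ) ≤ (π i : ℕ) + 1

lemma nearby0 {n : ℕ} (σ : Perm (Fin (n + 1))) :
    Nearby (Equiv.Perm.decomposeFin.symm (0, σ)) ↔ Nearby σ := by
  have h0 : Equiv.Perm.decomposeFin.symm (0, σ) 0 = 0 :=
    Equiv.Perm.decomposeFin_symm_apply_zero 0 σ
  have hs : ∀ j : Fin (n+1), Equiv.Perm.decomposeFin.symm (0, σ) j.succ = (σ j).succ := by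
    intro j
    rw [Equiv.Perm.decomposeFin_symm_apply_succ]
    simp
  constructor
  · intro h j
    have := h j.succ
    rw [hs j, Fin.val_succ, Fin.val_succ] at this
    omega
  · intro h i
    refine Fin.cases ?_ ?_ i
    · rw [h0]; simp
    · intro j
      have := h j
      rw [hs j, Fin.val_succ, Fin.val_succ]
      omega

lemma nearby1 {n : ℕ} (ρ : Perm (Fin n)) :
    Nearby (Equiv.Perm.decomposeFin.symm
      (1, Equiv.Perm.decomposeFin.symm (0, ρ)) : Perm (Fin (n+2))) ↔ Nearby ρ := by
  set σ : Perm (Fin (n+1)) := Equiv.Perm.decomposeFin.symm (0, ρ) with hσ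
  set π : Perm (Fin (n+2)) := Equiv.Perm.decomposeFin.symm (1, σ) with hπ
  have hσ0 : σ 0 = 0 := Equiv.Perm.decomposeFin_symm_apply_zero 0 ρ
  have hσs : ∀ j : Fin n, σ j.succ = (ρ j).succ := by
    intro j; rw [hσ, Equiv.Perm.decomposeFin_symm_apply_succ]; simp
  have h0 : π 0 = 1 := Equiv.Perm.decomposeFin_symm_apply_zero 1 σ
  have h1 : π (0 : Fin (n+1)).succ = 0 := by
    rw [hπ, Equiv.Perm.decomposeFin_symm_apply_succ, hσ0]
    simp [Equiv.swap_apply_right, Fin.succ_zero_eq_one]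
  have hs : ∀ j : Fin n, π j.succ.succ = (ρ j).succ.succ := by
    intro j
    rw [hπ, Equiv.Perm.decomposeFin_symm_apply_succ, hσs j]
    apply Equiv.swap_apply_of_ne_of_ne
    · exact Fin.succ_ne_zero _
    · intro hcon
      have := congrArg Fin.val hcon
      rw [Fin.val_succ, Fin.val_succ, Fin.val_one] at this
      omega
  constructor
  · intro h j
    have := h j.succ.succ
    rw [hs j, Fin.val_succ, Fin.val_succ, Fin.val_succ, Fin.val_succ] at this
    omega
  · intro h i
    refine Fin.cases ?_ ?_ i
    · rw [h0]; simp
    · intro j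
      refine Fin.cases ?_ ?_ j
      · rw [h1]; simp
      · intro k
        have := h k
        rw [hs k, Fin.val_succ, Fin.val_succ, Fin.val_succ, Fin.val_succ]
        omega

lemma decomposeFin_fst {n : ℕ} (π : Perm (Fin (n+1))) :
    (Equiv.Perm.decomposeFin π).1 = π 0 := by
  conv_rhs => rw [← Equiv.symm_apply_apply Equiv.Perm.decomposeFin π]
  rw [← Prod.mk.eta (p := Equiv.Perm.decomposeFin π), Equiv.Perm.decomposeFin_symm_apply_zero]

lemma decomposeFin_reconstruct {n : ℕ} (π : Perm (Fin (n+1))) :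
    Equiv.Perm.decomposeFin.symm (π 0, (Equiv.Perm.decomposeFin π).2) = π := by
  rw [← decomposeFin_fst, Prod.mk.eta, Equiv.symm_apply_apply]

def E0 {n : ℕ} : {π : Perm (Fin (n+2)) // Nearby π ∧ π 0 = 0} ≃ {σ : Perm (Fin (n+1)) // Nearby σ} where
  toFun x := ⟨(Equiv.Perm.decomposeFin x.1).2, by
    obtain ⟨π, hN, h0⟩ := x
    have hrec : Equiv.Perm.decomposeFin.symm (0, (Equiv.Perm.decomposeFin π).2) = π := by
      rw [← h0]; exact decomposeFin_reconstruct π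
    rw [← nearby0, hrec]; exact hN⟩
  invFun s := ⟨Equiv.Perm.decomposeFin.symm (0, s.1),
    (nearby0 s.1).2 s.2, Equiv.Perm.decomposeFin_symm_apply_zero 0 s.1⟩
  left_inv x := by
    obtain ⟨π, hN, h0⟩ := x
    apply Subtype.ext
    show Equiv.Perm.decomposeFin.symm (0, (Equiv.Perm.decomposeFin π).2) = π
    rw [← h0]; exact decomposeFin_reconstruct π
  right_inv s := by
    apply Subtype.ext
    show (Equiv.Perm.decomposeFin (Equiv.Perm.decomposeFin.symm (0, s.1))).2 = s.1
    rw [Equiv.apply_symm_apply]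

lemma reconstruct1 {n : ℕ} (π : Perm (Fin (n+2))) (hN : Nearby π) (h0 : π 0 ≠ 0) :
    Equiv.Perm.decomposeFin.symm (1, Equiv.Perm.decomposeFin.symm
      (0, (Equiv.Perm.decomposeFin ((Equiv.Perm.decomposeFin π).2)).2)) = π := by
  have hπ0 : π 0 = 1 := by
    have h := (hN 0).1
    have hne : (π 0 : ℕ) ≠ 0 := by
      intro hc; exact h0 (Fin.ext (by simpa using hc))
    apply Fin.ext
    rw [Fin.val_one]
    simp only [Fin.val_zero] at h
    omega
  have hπ1 : π (0 : Fin (n+1)).succ = 0 := by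
    set j := π.symm 0 with hj
    have hπj : π j = 0 := Equiv.apply_symm_apply π 0
    have h2 := (hN j).2
    have hj0 : (j : ℕ) ≠ 0 := by
      intro hc
      have : j = 0 := Fin.ext hc
      rw [this] at hπj
      exact h0 hπj
    rw [hπj, Fin.val_zero] at h2
    have : j = (0 : Fin (n+1)).succ := Fin.ext (by simp; omega)
    rw [← this, hπj]
  set σ := (Equiv.Perm.decomposeFin π).2 with hσ
  have hrec : Equiv.Perm.decomposeFin.symm (1, σ) = π := by
    rw [← hπ0]; exact decomposeFin_reconstruct π
  have hσ0 : σ 0 = 0 := by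
    have hthis := Equiv.Perm.decomposeFin_symm_apply_succ σ (1 : Fin (n+2)) 0
    rw [hrec, hπ1] at hthis
    have h1 : (σ 0).succ = (1 : Fin (n+2)) := by
      calc (σ 0).succ = Equiv.swap (0 : Fin (n+2)) 1 (Equiv.swap (0 : Fin (n+2)) 1 (σ 0).succ) :=
            (Equiv.swap_apply_self _ _ _).symm
        _ = Equiv.swap (0 : Fin (n+2)) 1 0 := by rw [← hthis]
        _ = 1 := Equiv.swap_apply_left _ _
    apply Fin.succ_injective
    rw [h1, Fin.succ_zero_eq_one]
  have hσrec : Equiv.Perm.decomposeFin.symm (0, (Equiv.Perm.decomposeFin σ).2) = σ := by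
    rw [← hσ0]; exact decomposeFin_reconstruct σ
  rw [hσrec, hrec]

def E1 {n : ℕ} : {π : Perm (Fin (n+2)) // Nearby π ∧ π 0 ≠ 0} ≃ {ρ : Perm (Fin n) // Nearby ρ} where
  toFun x := ⟨(Equiv.Perm.decomposeFin ((Equiv.Perm.decomposeFin x.1).2)).2, by
    obtain ⟨π, hN, h0⟩ := x
    have h := reconstruct1 π hN h0
    rw [← nearby1, h]; exact hN⟩
  invFun s := ⟨Equiv.Perm.decomposeFin.symm (1, Equiv.Perm.decomposeFin.symm (0, s.1)),
    (nearby1 s.1).2 s.2, by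
      rw [Equiv.Perm.decomposeFin_symm_apply_zero]
      intro hc
      exact absurd (congrArg Fin.val hc) (by simp)⟩
  left_inv x := Subtype.ext (reconstruct1 x.1 x.2.1 x.2.2)
  right_inv s := by
    apply Subtype.ext
    simp

lemma count_nearby (n : ℕ) : Nat.card {π : Perm (Fin n) // Nearby π} = Nat.fib (n + 1) := by
  induction n using Nat.strong_induction_on with
  | _ n ih =>
    match n with
    | 0 =>
      have hall : ∀ π : Perm (Fin 0), Nearby π := fun π i => i.elim0
      rw [Nat.card_congr (Equiv.subtypeUnivEquiv hall)]
      simp [Nat.card_eq_fintype_card]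
    | 1 =>
      have hall : ∀ π : Perm (Fin 1), Nearby π := by
        intro π i
        have h1 : π i = i := Subsingleton.elim _ _
        rw [h1]; omega
      rw [Nat.card_congr (Equiv.subtypeUnivEquiv hall)]
      simp [Nat.card_eq_fintype_card]
    | (m+2) =>
      classical
      have hsplit : Nat.card {π : Perm (Fin (m+2)) // Nearby π}
          = Nat.card {π : Perm (Fin (m+2)) // Nearby π ∧ π 0 = 0}
            + Nat.card {π : Perm (Fin (m+2)) // Nearby π ∧ ¬ π 0 = 0} := by
        rw [Nat.card_congr (Equiv.sumCompl (fun x : {π : Perm (Fin (m+2)) // Nearby π} => x.1 0 = 0)).symm,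
          Nat.card_sum]
        congr 1
        · exact Nat.card_congr (Equiv.subtypeSubtypeEquivSubtypeInter
            (fun π : Perm (Fin (m+2)) => Nearby π) (fun π => π 0 = 0))
        · exact Nat.card_congr (Equiv.subtypeSubtypeEquivSubtypeInter
            (fun π : Perm (Fin (m+2)) => Nearby π) (fun π => ¬ π 0 = 0))
      rw [hsplit]
      rw [Nat.card_congr E0]
      rw [Nat.card_congr E1]
      rw [ih (m+1) (by omega), ih m (by omega)]
      have h2 : Nat.fib (m+2) = Nat.fib m + Nat.fib (m+1) := Nat.fib_add_two
      have h3 : Nat.fib (m+3) = Nat.fib (m+1) + Nat.fib (m+2) := Nat.fib_add_two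
      simp only [show m+1+1 = m+2 from rfl, show m+2+1 = m+3 from rfl]
      omega

lemma noTwo {n : ℕ} (π : Perm (Fin n)) (h321 : Avoids π ![3,2,1]) (h312 : Avoids π ![3,1,2])
    (a b c : Fin n) (hab : a < b) (hbc : b < c) (hb : π b < π a) (hc : π c < π a) : False := by
  have habc : StrictMono ![a, b, c] := by
    intro x y hxy
    fin_cases x <;> fin_cases y <;>
      simp_all <;>
      first
        | exact hab | exact hbc | exact hab.trans hbc
        | exact absurd hxy (by decide)
  rw [Fin.lt_def] at hb hc
  rcases lt_or_ge (π b) (π c) with h | h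
  · apply h312
    refine ⟨![a, b, c], habc, ?_⟩
    rw [Fin.lt_def] at h
    intro x y
    fin_cases x <;> fin_cases y <;>
      simp only [Matrix.cons_val_zero, Matrix.cons_val_one, Matrix.head_cons, Matrix.cons_val_two,
        Matrix.tail_cons, Fin.mk_zero, Fin.mk_one,
        (show ((⟨2, by norm_num⟩ : Fin 3)) = 2 from rfl), Fin.lt_def] <;> omega
  · have hcb : (π c : ℕ) < (π b : ℕ) := by
      have hne : (π c : ℕ) ≠ (π b : ℕ) := by
        intro he
        exact absurd (π.injective (Fin.ext he)) (by intro h'; rw [h'] at hbc; exact lt_irrefl _ hbc)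
      have h2 : (π c : ℕ) ≤ (π b : ℕ) := h
      omega
    apply h321
    refine ⟨![a, b, c], habc, ?_⟩
    intro x y
    fin_cases x <;> fin_cases y <;>
      simp only [Matrix.cons_val_zero, Matrix.cons_val_one, Matrix.head_cons, Matrix.cons_val_two,
        Matrix.tail_cons, Fin.mk_zero, Fin.mk_one,
        (show ((⟨2, by norm_num⟩ : Fin 3)) = 2 from rfl), Fin.lt_def] <;> omega

lemma filter_lt_card {n : ℕ} (π : Perm (Fin n)) (c : Fin n) :
    (Finset.univ.filter (fun j => π j < c)).card = (c : ℕ) := by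
  have himg : Finset.univ.filter (fun j => π j < c)
      = (Finset.Iio c).map π.symm.toEmbedding := by
    ext j
    simp only [Finset.mem_filter, Finset.mem_univ, true_and, Finset.mem_map,
      Finset.mem_Iio, Equiv.coe_toEmbedding]
    constructor
    · intro h
      exact ⟨π j, h, π.symm_apply_apply j⟩
    · rintro ⟨v, hv, rfl⟩
      rwa [Equiv.apply_symm_apply]
  rw [himg, Finset.card_map, Fin.card_Iio]

lemma pos_count {n : ℕ} (π : Perm (Fin n)) (c : Fin n) (w : ℕ) (t : Finset ℕ)
    (ht : ∀ j : Fin n, j < c → (π j : ℕ) < w → (π j : ℕ) ∈ t) :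
    (c : ℕ) ≤ ((Finset.Iio c).filter (fun j => w ≤ (π j : ℕ))).card + t.card := by
  have hsplit := Finset.card_filter_add_card_filter_not
    (s := Finset.Iio c) (p := fun j => w ≤ (π j : ℕ))
  have hle : ((Finset.Iio c).filter (fun j => ¬ w ≤ (π j : ℕ))).card ≤ t.card := by
    apply Finset.card_le_card_of_injOn (fun j => (π j : ℕ))
    · intro j hj
      simp only [Finset.coe_filter, Set.mem_setOf_eq, Finset.mem_Iio, not_le] at hj
      exact ht j hj.1 hj.2
    · intro x _ y _ he
      exact π.injective (Fin.ext he)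
  have hc : (Finset.Iio c).card = (c : ℕ) := Fin.card_Iio c
  omega

lemma upper {n : ℕ} (π : Perm (Fin n)) (h321 : Avoids π ![3,2,1]) (h312 : Avoids π ![3,1,2]) :
    ∀ i : Fin n, (π i : ℕ) ≤ (i : ℕ) + 1 := by
  intro i
  by_contra hcon
  push_neg at hcon
  have hcard : (Finset.univ.filter (fun j => π j < π i)).card = (π i : ℕ) :=
    filter_lt_card π (π i)
  have hsplit := Finset.card_filter_add_card_filter_not
    (s := Finset.univ.filter (fun j => π j < π i)) (p := fun j => j ≤ i)
  have hle : (((Finset.univ.filter (fun j => π j < π i))).filter (fun j => j ≤ i)).card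
      ≤ (i : ℕ) := by
    have hsub : ((Finset.univ.filter (fun j => π j < π i))).filter (fun j => j ≤ i)
        ⊆ Finset.Iio i := by
      intro j hj
      simp only [Finset.mem_filter, Finset.mem_univ, true_and, Finset.mem_Iio] at hj ⊢
      rcases eq_or_lt_of_le hj.2 with he | hl
      · rw [he] at hj; exact absurd hj.1 (lt_irrefl _)
      · exact hl
    calc _ ≤ (Finset.Iio i).card := Finset.card_le_card hsub
      _ = (i : ℕ) := Fin.card_Iio i
  have h2 : 1 < (((Finset.univ.filter (fun j => π j < π i))).filter (fun j => ¬ j ≤ i)).card := by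
    omega
  obtain ⟨b, hb, c, hc, hbc⟩ := Finset.one_lt_card.1 h2
  simp only [Finset.mem_filter, Finset.mem_univ, true_and, not_le] at hb hc
  rcases lt_or_gt_of_ne hbc with h | h
  · exact noTwo π h321 h312 i b c hb.2 h hb.1 hc.1
  · exact noTwo π h321 h312 i c b hc.2 h hc.1 hb.1

lemma lower {n : ℕ} (π : Perm (Fin n)) (hF : IsFishburn π)
    (h321 : Avoids π ![3,2,1]) (h312 : Avoids π ![3,1,2]) :
    ∀ i : Fin n, (i : ℕ) ≤ (π i : ℕ) + 1 := by
  have hup := upper π h321 h312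
  suffices h : ∀ m : ℕ, ∀ i : Fin n, (i : ℕ) = m → (i : ℕ) ≤ (π i : ℕ) + 1 by
    intro i; exact h i i rfl
  intro m
  induction m using Nat.strong_induction_on with
  | _ m ihm =>
    intro i him
    by_contra hcon
    push_neg at hcon
    set v : ℕ := (π i : ℕ) with hv
    have hvn : v + 1 < n := by have := i.isLt; omega
    obtain ⟨q, hπq⟩ : ∃ q : Fin n, (π q : ℕ) = v + 1 :=
      ⟨π.symm ⟨v + 1, hvn⟩, by rw [Equiv.apply_symm_apply]⟩
    have hqi : (q : ℕ) ≠ (i : ℕ) := by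
      intro he
      have : q = i := Fin.ext he
      rw [this] at hπq; omega
    -- at least one j < i with π j ≥ v + 1
    have hbig : 1 ≤ ((Finset.Iio i).filter (fun j => v + 1 ≤ (π j : ℕ))).card := by
      have hpc := pos_count π i (v + 1) ((Finset.range (v + 1)).erase v) ?_
      · have hct : ((Finset.range (v + 1)).erase v).card = v := by
          rw [Finset.card_erase_of_mem (by simp), Finset.card_range]
          omega
        omega
      · intro j hji hlt
        have hne : (π j : ℕ) ≠ v := by
          intro he
          have h2 : π j = π i := Fin.ext he
          have h3 := π.injective h2
          rw [h3] at hji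
          exact absurd hji (lt_irrefl _)
        simp only [Finset.mem_erase, Finset.mem_range]
        exact ⟨hne, by omega⟩
    have hqlt : (q : ℕ) < (i : ℕ) := by
      by_contra hge
      push_neg at hge
      have hiq : i < q := by rw [Fin.lt_def]; omega
      obtain ⟨j1, hj1⟩ := Finset.card_pos.1 (by omega : 0 <
        ((Finset.Iio i).filter (fun j => v + 1 ≤ (π j : ℕ))).card)
      simp only [Finset.mem_filter, Finset.mem_Iio] at hj1
      have hj1lt : (j1 : ℕ) < (i : ℕ) := by rw [Fin.lt_def] at hj1; exact hj1.1
      have hj1q : (π j1 : ℕ) ≠ v + 1 := by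
        intro he
        have h2 : π j1 = π q := Fin.ext (by rw [hπq]; exact he)
        have h3 := π.injective h2
        rw [h3] at hj1lt
        omega
      apply noTwo π h321 h312 j1 i q hj1.1 hiq
      · rw [Fin.lt_def]; omega
      · rw [Fin.lt_def]; omega
    rcases Nat.lt_or_ge ((q : ℕ) + 1) (i : ℕ) with hqi1 | hqi1
    · -- Fishburn violation using q, q+1, i
      have hq1 : (q : ℕ) + 1 < n := by have := i.isLt; omega
      have hrv : v + 2 ≤ (π ⟨(q : ℕ) + 1, hq1⟩ : ℕ) := by
        have hIH : ((⟨(q : ℕ) + 1, hq1⟩ : Fin n) : ℕ) ≤ (π ⟨(q : ℕ) + 1, hq1⟩ : ℕ) + 1 :=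
          ihm ((q : ℕ) + 1) (by omega) _ rfl
        have hrval : ((⟨(q : ℕ) + 1, hq1⟩ : Fin n) : ℕ) = (q : ℕ) + 1 := rfl
        have h1 : (π ⟨(q : ℕ) + 1, hq1⟩ : ℕ) ≠ v := by
          intro he
          have h2 : π ⟨(q : ℕ) + 1, hq1⟩ = π i := Fin.ext he
          have h3 := π.injective h2
          have h4 := congrArg Fin.val h3
          rw [hrval] at h4
          omega
        have h2 : (π ⟨(q : ℕ) + 1, hq1⟩ : ℕ) ≠ v + 1 := by
          intro he
          have h2 : π ⟨(q : ℕ) + 1, hq1⟩ = π q := Fin.ext (by rw [hπq]; exact he)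
          have h3 := π.injective h2
          have h4 := congrArg Fin.val h3
          rw [hrval] at h4
          omega
        have h5 := hup q
        omega
      apply hF
      refine ⟨(q : ℕ), (i : ℕ), hqi1, i.isLt, ?_, ?_, ?_⟩
      · rw [Fin.lt_def]
        have e1 : (⟨(q : ℕ), by omega⟩ : Fin n) = q := Fin.ext rfl
        rw [e1]
        omega
      · rw [Fin.lt_def]
        have e1 : (⟨(q : ℕ), by omega⟩ : Fin n) = q := Fin.ext rfl
        have e2 : (⟨(i : ℕ), by omega⟩ : Fin n) = i := Fin.ext rfl
        rw [e1, e2]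
        omega
      · have e1 : (⟨(q : ℕ), by omega⟩ : Fin n) = q := Fin.ext rfl
        have e2 : (⟨(i : ℕ), by omega⟩ : Fin n) = i := Fin.ext rfl
        rw [e1, e2]
        omega
    · -- i = q + 1
      have hiqv : (i : ℕ) = (q : ℕ) + 1 := by omega
      have hq_ge : v + 1 ≤ (q : ℕ) := by omega
      have hbig2 : 1 ≤ ((Finset.Iio q).filter (fun j => v + 2 ≤ (π j : ℕ))).card := by
        have hpc := pos_count π q (v + 2) (((Finset.range (v + 2)).erase v).erase (v + 1)) ?_
        · have hct : (((Finset.range (v + 2)).erase v).erase (v + 1)).card = v := by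
            rw [Finset.card_erase_of_mem (by simp [Finset.mem_erase]),
              Finset.card_erase_of_mem (by simp), Finset.card_range]
            omega
          omega
        · intro j hjq hlt
          have hjqv : (j : ℕ) < (q : ℕ) := by rw [Fin.lt_def] at hjq; exact hjq
          have hne1 : (π j : ℕ) ≠ v := by
            intro he
            have h2 : π j = π i := Fin.ext he
            have h3 := π.injective h2
            have h4 := congrArg Fin.val h3
            omega
          have hne2 : (π j : ℕ) ≠ v + 1 := by
            intro he
            have h2 : π j = π q := Fin.ext (by rw [hπq]; exact he)
            have h3 := π.injective h2
            have h4 := congrArg Fin.val h3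
            omega
          simp only [Finset.mem_erase, Finset.mem_range]
          exact ⟨hne2, hne1, by omega⟩
      obtain ⟨j, hj⟩ := Finset.card_pos.1 (by omega : 0 <
        ((Finset.Iio q).filter (fun j => v + 2 ≤ (π j : ℕ))).card)
      simp only [Finset.mem_filter, Finset.mem_Iio] at hj
      have hqlt2 : q < i := by rw [Fin.lt_def]; omega
      apply noTwo π h321 h312 j q i hj.1 hqlt2
      · rw [Fin.lt_def]; omega
      · rw [Fin.lt_def]; omega

lemma nearby_not_contains {n : ℕ} (π : Equiv.Perm (Fin n)) (hN : Nearby π) (p : Fin 3 → ℕ)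
    (hp : p 2 < p 0) : ¬ Contains π p := by
  rintro ⟨f, hf, hiff⟩
  have h20 : π (f 2) < π (f 0) := (hiff 2 0).1 hp
  have h01 : f 0 < f 1 := hf (by decide)
  have h12 : f 1 < f 2 := hf (by decide)
  rw [Fin.lt_def] at h20 h01 h12
  have ha := (hN (f 0)).1
  have hb := (hN (f 2)).2
  omega

lemma nearby_isFishburn {n : ℕ} (π : Equiv.Perm (Fin n)) (hN : Nearby π) : IsFishburn π := by
  rintro ⟨i, j, hij, hj, h1, h2, h3⟩
  rw [Fin.lt_def] at h1 h2
  have ha := (hN ⟨i, by omega⟩).1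
  have hb := (hN ⟨j, hj⟩).2
  simp only [] at ha hb
  omega

theorem fishburn_321_312 (n : ℕ) (hn : 1 ≤ n) :
    {π : Equiv.Perm (Fin n) | IsFishburn π ∧ Avoids π ![3, 2, 1] ∧ Avoids π ![3, 1, 2]}.ncard = Nat.fib (n + 1) := by

  have hset : {π : Equiv.Perm (Fin n) | IsFishburn π ∧ Avoids π ![3, 2, 1] ∧ Avoids π ![3, 1, 2]}
      = {π : Equiv.Perm (Fin n) | Nearby π} := by
    ext π
    simp only [Set.mem_setOf_eq]
    constructor
    · rintro ⟨hfb, h1, h2⟩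
      intro i
      exact ⟨upper π h1 h2 i, lower π hfb h1 h2 i⟩
    · intro hN
      refine ⟨nearby_isFishburn π hN, ?_, ?_⟩
      · exact nearby_not_contains π hN _ (by decide)
      · exact nearby_not_contains π hN _ (by decide)
  rw [hset, ← Nat.card_coe_set_eq]
  exact count_nearby n
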